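/- If n is an integer with n ≥ 2 and s is a prime power such that (s^n − 1)/(s − 1) is a prime power, then n is prime. -/

import Mathlib

open Finset

private lemma geom_nat (s : ℕ) (hs : 1 ≤ s) (m : ℕ) :
    (s - 1) * ∑ i ∈ range m, s ^ i = s ^ m - 1 := by
  induction m with
  | zero => simp
  | succ k ih =>
    rw [Finset.sum_range_succ, Nat.mul_add, ih, pow_succ, Nat.sub_mul, one_mul]
    have h1 : 1 ≤ s ^ k := Nat.one_le_pow _ _ hs
    have h2 : s ^ k ≤ s ^ k * s := Nat.le_mul_of_pos_right _ hs
    have h3 : s * s ^ k = s ^ k * s := mul_comm _ _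
    omega

private lemma cast_one_of_dvd {q s : ℕ} (hs : 1 ≤ s) (h : q ∣ s - 1) :
    (s : ZMod q) = 1 := by
  have h1 : (1 : ℕ) ≡ s [MOD q] := (Nat.modEq_iff_dvd' hs).mpr h
  have := (ZMod.natCast_eq_natCast_iff _ _ _).mpr h1
  simpa using this.symm

private lemma dvd_of_cast_one {q s : ℕ} (hs : 1 ≤ s) (h : (s : ZMod q) = 1) :
    q ∣ s - 1 := by
  have : (1 : ℕ) ≡ s [MOD q] := by
    rw [← ZMod.natCast_eq_natCast_iff]; simpa using h.symm
  exact (Nat.modEq_iff_dvd' hs).mp this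

private lemma aux : ∀ n : ℕ, 2 ≤ n → ∀ s q a : ℕ, 2 ≤ s → q.Prime → 0 < a →
    s ^ n - 1 = q ^ a * (s - 1) → n.Prime := by
  intro n
  induction n using Nat.strong_induction_on with
  | _ n IH =>
  intro hn s q a hs hq ha heq
  by_contra hnp
  have hq1 : 1 < q := hq.one_lt
  set p := n.minFac with hpdef
  have hp : p.Prime := Nat.minFac_prime (by omega)
  obtain ⟨m, hm⟩ := Nat.minFac_dvd n
  have hp2 : 2 ≤ p := hp.two_le
  rw [← hpdef] at hm
  have hm2 : 2 ≤ m := by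
    by_contra hlt
    push_neg at hlt
    interval_cases m
    · simp at hm; omega
    · rw [mul_one] at hm; exact hnp (hm ▸ hp)
  have hmn : m < n := by
    have : 2 * m ≤ p * m := Nat.mul_le_mul_right m hp2
    omega
  set A := ∑ i ∈ range m, s ^ i with hAdef
  set B := ∑ i ∈ range p, (s ^ m) ^ i with hBdef
  have hA : (s - 1) * A = s ^ m - 1 := geom_nat s (by omega) m
  have hsm1 : 1 ≤ s ^ m := Nat.one_le_pow _ _ (by omega)
  have hsm2 : 2 ≤ s ^ m := le_trans hs (Nat.le_self_pow (by omega) s)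
  have hB : (s ^ m - 1) * B = s ^ n - 1 := by
    have := geom_nat (s ^ m) hsm1 p
    rwa [← pow_mul, mul_comm m p, ← hm] at this
  have key : A * B = q ^ a := by
    have h1 : (s - 1) * (A * B) = (s - 1) * q ^ a := by
      rw [← mul_assoc, hA, hB, heq, mul_comm]
    exact Nat.eq_of_mul_eq_mul_left (by omega) h1
  have hA1 : 1 < A := by
    have : (1 : ℕ) + s ≤ A := by
      have : ∑ i ∈ range 2, s ^ i ≤ A :=
        Finset.sum_le_sum_of_subset (Finset.range_subset_range.mpr hm2)
      simpa [Finset.sum_range_succ] using this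
    omega
  have hB1 : 1 < B := by
    have : (1 : ℕ) + s ^ m ≤ B := by
      have : ∑ i ∈ range 2, (s ^ m) ^ i ≤ B :=
        Finset.sum_le_sum_of_subset (Finset.range_subset_range.mpr hp2)
      simpa [Finset.sum_range_succ] using this
    omega
  -- q divides A and B
  obtain ⟨i, hia, hAq⟩ := (Nat.dvd_prime_pow hq).mp ⟨B, key.symm⟩
  have hi1 : 1 ≤ i := by by_contra h; simp [Nat.lt_one_iff.mp (by omega : i < 1)] at hAq; omega
  have hqA : q ∣ A := hAq ▸ dvd_pow_self q (by omega)
  obtain ⟨j, hja, hBq⟩ := (Nat.dvd_prime_pow hq).mp ⟨A, by rw [mul_comm]; exact key.symm⟩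
  have hj1 : 1 ≤ j := by by_contra h; simp [Nat.lt_one_iff.mp (by omega : j < 1)] at hBq; omega
  have hqB : q ∣ B := hBq ▸ dvd_pow_self q (by omega)
  -- q ∣ s^m - 1
  have hqsm : q ∣ s ^ m - 1 := hA ▸ Dvd.dvd.mul_left hqA (s - 1)
  have hsmc : ((s : ZMod q)) ^ m = 1 := by
    have := cast_one_of_dvd hsm1 hqsm
    push_cast at this
    exact this
  -- B ≡ p mod q, so q = p
  have hBp : ((B : ℕ) : ZMod q) = (p : ZMod q) := by
    rw [hBdef]
    push_cast
    rw [← Nat.cast_pow s m]  -- not needed maybe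
    simp [hsmc]
  have hqp : q = p := by
    have h0 : ((B : ℕ) : ZMod q) = 0 := (ZMod.natCast_eq_zero_iff _ _).mpr hqB
    have : (p : ZMod q) = 0 := by rw [← hBp, h0]
    have := (ZMod.natCast_eq_zero_iff _ _).mp this
    exact ((Nat.prime_dvd_prime_iff_eq hq hp).mp this)
  -- Fermat: s ≠ 0 in ZMod q
  haveI : Fact q.Prime := ⟨hq⟩
  have hqs : ¬ q ∣ s := by
    intro hd
    have h1 : q ∣ s ^ m := hd.trans (dvd_pow_self s (by omega : m ≠ 0))
    have h2 : q ∣ s ^ m - (s ^ m - 1) := Nat.dvd_sub h1 hqsm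
    have h3 : s ^ m - (s ^ m - 1) = 1 := by omega
    rw [h3] at h2
    exact absurd (Nat.dvd_one.mp h2) (by omega)
  have hs0 : (s : ZMod q) ≠ 0 := fun h => hqs ((ZMod.natCast_eq_zero_iff _ _).mp h)
  have fermat : (s : ZMod q) ^ (q - 1) = 1 := ZMod.pow_card_sub_one_eq_one hs0
  -- gcd(m, q-1) = 1
  have hgcd : Nat.gcd m (q - 1) = 1 := by
    by_contra hg
    set r := (Nat.gcd m (q - 1)).minFac with hrdef
    have hgpos : 0 < Nat.gcd m (q - 1) := Nat.gcd_pos_of_pos_left _ (by omega)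
    have hr : r.Prime := Nat.minFac_prime hg
    have hrm : r ∣ m := (Nat.minFac_dvd _).trans (Nat.gcd_dvd_left _ _)
    have hrq : r ∣ q - 1 := (Nat.minFac_dvd _).trans (Nat.gcd_dvd_right _ _)
    have hrn : r ∣ n := hm ▸ hrm.mul_left p
    have h1 : p ≤ r := Nat.minFac_le_of_dvd hr.two_le hrn
    have h2 : r ≤ q - 1 := Nat.le_of_dvd (by omega) hrq
    omega
  have hsq1 : (s : ZMod q) = 1 := by
    have := (pow_gcd_eq_one (a := (s : ZMod q))).mpr ⟨hsmc, fermat⟩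
    rwa [hgcd, pow_one] at this
  have hqs1 : q ∣ s - 1 := dvd_of_cast_one (by omega) hsq1
  -- q ∣ m via A ≡ m mod q
  have hAm : ((A : ℕ) : ZMod q) = (m : ZMod q) := by
    rw [hAdef]; push_cast; simp [hsq1]
  have hqm : q ∣ m := by
    have h0 : ((A : ℕ) : ZMod q) = 0 := (ZMod.natCast_eq_zero_iff _ _).mpr hqA
    exact (ZMod.natCast_eq_zero_iff _ _).mp (by rw [← hAm, h0])
  -- m is prime by IH
  have hmprime : m.Prime := by
    refine IH m hmn hm2 s q i hs hq hi1 ?_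
    rw [← hA, hAq, mul_comm]
  have hmp : m = q := ((Nat.prime_dvd_prime_iff_eq hq hmprime).mp hqm).symm
  -- q^2 ∣ s^m - 1
  have hq2 : q ^ 2 ∣ s ^ m - 1 := by
    rw [← hA, sq]
    exact mul_dvd_mul hqs1 hqA
  -- B ≡ q mod q^2 in ZMod (q^2)
  have hsmq2 : ((s ^ m : ℕ) : ZMod (q ^ 2)) = 1 := cast_one_of_dvd hsm1 hq2
  have hBq2 : ((B : ℕ) : ZMod (q ^ 2)) = (p : ZMod (q ^ 2)) := by
    rw [hBdef]; push_cast at hsmq2 ⊢; simp [hsmq2]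
  -- B = q^j with j ≥ 1; derive contradiction
  have hqlt : q < 1 + s ^ m := by
    have h1 : q ≤ s - 1 := Nat.le_of_dvd (by omega) hqs1
    have h2 : s ≤ s ^ m := Nat.le_self_pow (by omega) s
    omega
  have hBgt : q < B := by
    have : (1 : ℕ) + s ^ m ≤ B := by
      have : ∑ i ∈ range 2, (s ^ m) ^ i ≤ B :=
        Finset.sum_le_sum_of_subset (Finset.range_subset_range.mpr hp2)
      simpa [Finset.sum_range_succ] using this
    omega
  have hj2 : 2 ≤ j := by
    rcases Nat.lt_or_ge j 2 with h | h
    · have hj1' : j = 1 := by omega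
      rw [hj1', pow_one] at hBq
      omega
    · exact h
  have hq2B : q ^ 2 ∣ B := hBq ▸ pow_dvd_pow q hj2
  have h0 : ((B : ℕ) : ZMod (q ^ 2)) = 0 := (ZMod.natCast_eq_zero_iff _ _).mpr hq2B
  have : (p : ZMod (q ^ 2)) = 0 := by rw [← hBq2, h0]
  have hq2p : q ^ 2 ∣ p := (ZMod.natCast_eq_zero_iff _ _).mp this
  have : q ^ 2 ≤ p := Nat.le_of_dvd (by omega) hq2p
  nlinarith [hq.two_le]

theorem stmt_8 (n s : ℕ) (hn : 2 ≤ n) (hs : IsPrimePow s)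
    (h : ∃ q a : ℕ, q.Prime ∧ 0 < a ∧ s ^ n - 1 = q ^ a * (s - 1)) :
    n.Prime := by
  obtain ⟨q, a, hq, ha, heq⟩ := h
  exact aux n hn s q a hs.one_lt hq ha heq
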